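/- Let X be a T0 space, Y a well-filtered T0 space, and f : X → Y a continuous map. If A ⊆ X is a Rudin set (i.e., A has the Rudin property), then there exists a unique point y ∈ Y such that the closure of f(A) equals the closure of {y}. -/

import Mathlib

open Set

universe u

variable {α : Type u}

/-- The specialization order used in the paper: `x ≤ y` iff `x ∈ closure {y}`. -/
def specLE [TopologicalSpace α] (x y : α) : Prop := x ∈ closure ({y} : Set α)

/-- `↑x = {y | x ≤ y}` in the specialization order. -/
def upOf [TopologicalSpace α] (x : α) : Set α := {y | specLE x y}

/-- `↑F = {y | ∃ a ∈ F, a ≤ y}` in the specialization order. -/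
def upSetOf [TopologicalSpace α] (F : Set α) : Set α := {y | ∃ a ∈ F, specLE a y}

/-- `↓B = {x | ∃ b ∈ B, x ≤ b}` in the specialization order. -/
def downOf [TopologicalSpace α] (B : Set α) : Set α := {x | ∃ b ∈ B, specLE x b}

/-- A set directed with respect to the specialization order: nonempty, and any two
elements have an upper bound in it. -/
def SDirected [TopologicalSpace α] (D : Set α) : Prop :=
  D.Nonempty ∧ ∀ a ∈ D, ∀ b ∈ D, ∃ c ∈ D, specLE a c ∧ specLE b c

/-- `s` is a supremum (least upper bound) of `D` in the specialization order. -/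
def SIsSup [TopologicalSpace α] (D : Set α) (s : α) : Prop :=
  (∀ d ∈ D, specLE d s) ∧ ∀ t : α, (∀ d ∈ D, specLE d t) → specLE s t

/-- Upper set (= saturated set) in the specialization order. -/
def SUpper [TopologicalSpace α] (A : Set α) : Prop :=
  ∀ ⦃x y : α⦄, x ∈ A → specLE x y → y ∈ A

/-- Scott open set with respect to the specialization order. -/
def SScottOpen [TopologicalSpace α] (U : Set α) : Prop :=
  SUpper U ∧ ∀ D : Set α, SDirected D → ∀ s : α, SIsSup D s → s ∈ U → (D ∩ U).Nonempty

/-- A d-space: a dcpo under the specialization order, all open sets Scott open. -/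
def IsDSpace (α : Type u) [TopologicalSpace α] : Prop :=
  (∀ D : Set α, SDirected D → ∃ s : α, SIsSup D s) ∧
    ∀ U : Set α, IsOpen U → SScottOpen U

/-- Member of `K(X)`: nonempty, compact and saturated. -/
def IsKSet [TopologicalSpace α] (K : Set α) : Prop :=
  K.Nonempty ∧ IsCompact K ∧ SUpper K

/-- A filtered family of sets: nonempty, and any two members contain a common member. -/
def FilteredFam (𝒦 : Set (Set α)) : Prop :=
  𝒦.Nonempty ∧ ∀ K1 ∈ 𝒦, ∀ K2 ∈ 𝒦, ∃ K3 ∈ 𝒦, K3 ⊆ K1 ∩ K2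

/-- Well-filtered space: for every filtered family of nonempty compact saturated sets whose
intersection is contained in an open `U`, some member is contained in `U`. -/
def IsWellFiltered (α : Type u) [TopologicalSpace α] : Prop :=
  ∀ 𝒦 : Set (Set α), (∀ K ∈ 𝒦, IsKSet K) → FilteredFam 𝒦 →
    ∀ U : Set α, IsOpen U → ⋂₀ 𝒦 ⊆ U → ∃ K ∈ 𝒦, K ⊆ U

/-- Rudin set: a nonempty set `A` such that for some filtered family `𝒦 ⊆ K(X)`,
`closure A` is a minimal closed set meeting every member of `𝒦`. -/
def IsRudin [TopologicalSpace α] (A : Set α) : Prop :=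
  A.Nonempty ∧ ∃ 𝒦 : Set (Set α), (∀ K ∈ 𝒦, IsKSet K) ∧ FilteredFam 𝒦 ∧
    (∀ K ∈ 𝒦, (closure A ∩ K).Nonempty) ∧
    ∀ B : Set α, IsClosed B → B ⊆ closure A → (∀ K ∈ 𝒦, (B ∩ K).Nonempty) → B = closure A

/-- Well-filtered determined set: every continuous map into a well-filtered T0 space sends it
to a set whose closure is the closure of a unique point. -/
def IsWFD [TopologicalSpace α] (A : Set α) : Prop :=
  ∀ (Y : Type u) [TopologicalSpace Y] [T0Space Y], IsWellFiltered Y →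
    ∀ f : α → Y, Continuous f → ∃! y : Y, closure (f '' A) = closure ({y} : Set Y)

/-- Irreducible set. -/
def IsIrred [TopologicalSpace α] (A : Set α) : Prop :=
  A.Nonempty ∧ ∀ F1 F2 : Set α, IsClosed F1 → IsClosed F2 → A ⊆ F1 ∪ F2 → A ⊆ F1 ∨ A ⊆ F2

/-- Sober space: every irreducible closed set is the closure of a unique point. -/
def IsSober (α : Type u) [TopologicalSpace α] : Prop :=
  ∀ A : Set α, IsClosed A → IsIrred A → ∃! x : α, A = closure ({x} : Set α)

/-- `A` has a maximal element with respect to the specialization order. -/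
def HasMaxElem [TopologicalSpace α] (A : Set α) : Prop :=
  ∃ m ∈ A, ∀ a ∈ A, specLE m a → a = m

/-- Strong d-space. -/
def IsStrongDSpace (α : Type u) [TopologicalSpace α] : Prop :=
  ∀ D : Set α, SDirected D → ∀ x : α, ∀ U : Set α, IsOpen U →
    (⋂ d ∈ D, upOf d) ∩ upOf x ⊆ U → ∃ d ∈ D, upOf d ∩ upOf x ⊆ U

section Aux
variable [TopologicalSpace α]

lemma specLE_refl (x : α) : specLE x x := subset_closure rfl

lemma specLE_trans {x y z : α} (h1 : specLE x y) (h2 : specLE y z) : specLE x z :=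
  closure_minimal (singleton_subset_iff.2 h2) isClosed_closure h1

lemma open_upper {U : Set α} (hU : IsOpen U) {x y : α} (hx : x ∈ U) (h : specLE x y) :
    y ∈ U := by
  by_contra hy
  have : closure ({y} : Set α) ⊆ Uᶜ :=
    closure_minimal (singleton_subset_iff.2 hy) hU.isClosed_compl
  exact this h hx

lemma closed_lower {B : Set α} (hB : IsClosed B) {x b : α} (hb : b ∈ B) (h : specLE x b) :
    x ∈ B :=
  closure_minimal (singleton_subset_iff.2 hb) hB h

lemma subset_upSetOf (S : Set α) : S ⊆ upSetOf S := fun s hs => ⟨s, hs, specLE_refl s⟩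

lemma sUpper_upSetOf (S : Set α) : SUpper (upSetOf S) := by
  rintro x y ⟨a, haS, hax⟩ hxy
  exact ⟨a, haS, specLE_trans hax hxy⟩

lemma upSetOf_mono {S T : Set α} (h : S ⊆ T) : upSetOf S ⊆ upSetOf T := by
  rintro y ⟨a, haS, hay⟩; exact ⟨a, h haS, hay⟩

lemma isCompact_upSetOf {S : Set α} (hS : IsCompact S) : IsCompact (upSetOf S) := by
  apply isCompact_of_finite_subcover
  intro ι U hU hcov
  obtain ⟨t, ht⟩ := hS.elim_finite_subcover U hU ((subset_upSetOf S).trans hcov)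
  refine ⟨t, ?_⟩
  rintro y ⟨a, haS, hay⟩
  have := ht haS
  simp only [mem_iUnion] at this ⊢
  obtain ⟨i, hit, hai⟩ := this
  exact ⟨i, hit, open_upper (hU i) hai hay⟩

end Aux

theorem stmt_2' {α : Type u} {β : Type u} [TopologicalSpace α] [T0Space α]
    [TopologicalSpace β] [T0Space β] (hβ : IsWellFiltered β)
    (f : α → β) (hf : Continuous f) (A : Set α) (hA : IsRudin A) :
    ∃! y : β, closure (f '' A) = closure ({y} : Set β) := by
  obtain ⟨hAne, 𝒦, h𝒦K, ⟨h𝒦ne, h𝒦F⟩, h𝒦meet, h𝒦min⟩ := hA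
  set C : Set β := closure (f '' A) with hC
  -- cores
  have hcore_sub : ∀ K ∈ 𝒦, f '' (closure A ∩ K) ⊆ C := by
    intro K hK
    refine subset_trans (image_mono (f := f) inter_subset_left) ?_
    exact (image_closure_subset_closure_image hf)
  have hcore_ne : ∀ K ∈ 𝒦, (f '' (closure A ∩ K)).Nonempty := by
    intro K hK
    exact (h𝒦meet K hK).image f
  -- the transported family
  set 𝒦₂ : Set (Set β) := (fun K => upSetOf (f '' (closure A ∩ K))) '' 𝒦 with h𝒦₂
  have h𝒦₂K : ∀ S ∈ 𝒦₂, IsKSet S := by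
    rintro S ⟨K, hK, rfl⟩
    refine ⟨(hcore_ne K hK).mono (subset_upSetOf _), ?_, sUpper_upSetOf _⟩
    exact isCompact_upSetOf (((h𝒦K K hK).2.1.inter_left isClosed_closure).image hf)
  have h𝒦₂F : FilteredFam 𝒦₂ := by
    constructor
    · exact h𝒦ne.image _
    · rintro S1 ⟨K1, hK1, rfl⟩ S2 ⟨K2, hK2, rfl⟩
      obtain ⟨K3, hK3, hsub⟩ := h𝒦F K1 hK1 K2 hK2
      refine ⟨_, mem_image_of_mem _ hK3, subset_inter ?_ ?_⟩
      · exact upSetOf_mono (image_mono (f := f) (inter_subset_inter_right _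
          (hsub.trans inter_subset_left)))
      · exact upSetOf_mono (image_mono (f := f) (inter_subset_inter_right _
          (hsub.trans inter_subset_right)))
  -- minimality transported: any closed B ⊆ C meeting every member of 𝒦₂ equals C
  have hmin : ∀ B : Set β, IsClosed B → B ⊆ C → (∀ S ∈ 𝒦₂, (B ∩ S).Nonempty) → B = C := by
    intro B hBcl hBC hBmeet
    have hD : f ⁻¹' B ∩ closure A = closure A := by
      apply h𝒦min
      · exact (hBcl.preimage hf).inter isClosed_closure
      · exact inter_subset_right
      · intro K hK
        obtain ⟨b, hbB, s, ⟨a, ⟨haA, haK⟩, rfl⟩, hab⟩ := hBmeet _ (mem_image_of_mem _ hK)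
        have hfa : f a ∈ B := closed_lower hBcl hbB hab
        exact ⟨a, ⟨hfa, haA⟩, haK⟩
    have : f '' A ⊆ B := by
      rintro y ⟨x, hxA, rfl⟩
      have : x ∈ f ⁻¹' B ∩ closure A := hD.symm ▸ subset_closure hxA
      exact this.1
    exact le_antisymm hBC (closure_minimal this hBcl)
  -- well-filteredness: find y ∈ ⋂𝒦₂ ∩ C
  have hy : ∃ y, y ∈ ⋂₀ 𝒦₂ ∧ y ∈ C := by
    by_contra h
    push_neg at h
    have hsub : ⋂₀ 𝒦₂ ⊆ Cᶜ := fun y hyi => h y hyi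
    obtain ⟨S, hS, hSU⟩ := hβ 𝒦₂ h𝒦₂K h𝒦₂F Cᶜ isClosed_closure.isOpen_compl hsub
    obtain ⟨K, hK, rfl⟩ := hS
    obtain ⟨b, hb⟩ := hcore_ne K hK
    exact hSU (subset_upSetOf _ hb) (hcore_sub K hK hb)
  obtain ⟨y, hyi, hyC⟩ := hy
  have hcly : closure ({y} : Set β) = C := by
    apply hmin
    · exact isClosed_closure
    · exact closure_minimal (singleton_subset_iff.2 hyC) isClosed_closure
    · intro S hS
      exact ⟨y, subset_closure rfl, hyi S hS⟩
  refine ⟨y, hcly.symm, ?_⟩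
  intro z hz
  have h1 : z ∈ closure ({y} : Set β) := hcly.symm ▸ hz ▸ subset_closure rfl
  have h2 : y ∈ closure ({z} : Set β) := by
    rw [← hz]; exact hcly ▸ subset_closure rfl
  exact ((specializes_iff_mem_closure.2 h1).antisymm (specializes_iff_mem_closure.2 h2)).eq.symm

/-- a continuous image of a Rudin set in a well-filtered space has
closure the closure of a unique point. -/
theorem stmt_2 {α : Type u} {β : Type u} [TopologicalSpace α] [T0Space α]
    [TopologicalSpace β] [T0Space β] (hβ : IsWellFiltered β)
    (f : α → β) (hf : Continuous f) (A : Set α) (hA : IsRudin A) :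
    ∃! y : β, closure (f '' A) = closure ({y} : Set β) :=
  stmt_2' hβ f hf A hA
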